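/- Let R_self > |R_m| ≥ 0, R̄_m = R_m/R_self, and ψ ∈ ℝ. The common magnitude of the entries of Z̄₀^{−1/2}(1, e^{−iψ})ᵀ, where Z̄₀ = [[1, R̄_m],[R̄_m, 1]], equals (1/√(2 + 2√(1 − R̄_m²)))·√((1/√(1−R̄_m²) + 1)² + R̄_m²/(1−R̄_m²) − 2(1/√(1−R̄_m²)+1)·(R̄_m/√(1−R̄_m²))·cos ψ). -/

import Mathlib

open Matrix Complex

private lemma habs_aux (ψ u v : ℝ) :
    ‖(u : ℂ) + (v : ℂ) * Complex.exp (-(ψ : ℂ) * Complex.I)‖ =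
      Real.sqrt (u ^ 2 + v ^ 2 + 2 * u * v * Real.cos ψ) := by
  have hexp : Complex.exp (-(ψ : ℂ) * Complex.I)
      = (Real.cos ψ : ℂ) - (Real.sin ψ : ℂ) * Complex.I := by
    rw [show -(ψ : ℂ) = ((-ψ : ℝ) : ℂ) by push_cast; ring, Complex.exp_mul_I,
      ← Complex.ofReal_cos, ← Complex.ofReal_sin, Real.cos_neg, Real.sin_neg]
    push_cast; ring
  rw [hexp, Complex.norm_def, Complex.normSq_apply]
  have hre : ((u : ℂ) + (v : ℂ) * ((Real.cos ψ : ℂ) - (Real.sin ψ : ℂ) * Complex.I)).re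
      = u + v * Real.cos ψ := by
    simp [Complex.cos_ofReal_re, Complex.sin_ofReal_re]
  have him : ((u : ℂ) + (v : ℂ) * ((Real.cos ψ : ℂ) - (Real.sin ψ : ℂ) * Complex.I)).im
      = -(v * Real.sin ψ) := by
    simp [Complex.cos_ofReal_re, Complex.sin_ofReal_re]
  rw [hre, him]
  congr 1
  have := Real.sin_sq_add_cos_sq ψ
  nlinarith [this]

set_option maxHeartbeats 1000000 in
/-- Proposition 1 (closed form): the common magnitude of the entries of Z̄₀^{−1/2}·a(ψ). -/
theorem stmt_4 (Rself Rm : ℝ) (h : |Rm| < Rself) (ψ : ℝ)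
    (Rmbar : ℝ) (hRmbar : Rmbar = Rm / Rself)
    (S : Matrix (Fin 2) (Fin 2) ℝ) (hS : S.PosDef)
    (hSsq : S * S = !![1, Rmbar; Rmbar, 1])
    (a : Fin 2 → ℂ) (ha : a = ![1, Complex.exp (-(ψ : ℂ) * Complex.I)]) :
    ∀ j : Fin 2,
      ‖((S⁻¹.map (Complex.ofReal)) *ᵥ a) j‖ =
        (1 / Real.sqrt (2 + 2 * Real.sqrt (1 - Rmbar ^ 2))) *
          Real.sqrt ((1 / Real.sqrt (1 - Rmbar ^ 2) + 1) ^ 2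
            + Rmbar ^ 2 / (1 - Rmbar ^ 2)
            - 2 * (1 / Real.sqrt (1 - Rmbar ^ 2) + 1)
              * (Rmbar / Real.sqrt (1 - Rmbar ^ 2)) * Real.cos ψ) := by
  intro j
  have hRself : 0 < Rself := lt_of_le_of_lt (abs_nonneg Rm) h
  have hr : |Rmbar| < 1 := by
    rw [hRmbar, abs_div, abs_of_pos hRself]
    exact (div_lt_one hRself).2 h
  have hr' := abs_lt.1 hr
  have hr2 : 0 < 1 - Rmbar ^ 2 := by nlinarith
  set d := Real.sqrt (1 - Rmbar ^ 2) with hd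
  have hdpos : 0 < d := Real.sqrt_pos.2 hr2
  have hdsq : d ^ 2 = 1 - Rmbar ^ 2 := Real.sq_sqrt hr2.le
  -- symmetry of S
  have hsym : S 1 0 = S 0 1 := by
    have := hS.1.apply 0 1
    simpa using this
  -- entry equations from S * S = Z
  have e00 : S 0 0 * S 0 0 + S 0 1 * S 1 0 = 1 := by
    have := congrFun (congrFun hSsq 0) 0
    simpa [Matrix.mul_apply, Fin.sum_univ_two] using this
  have e01 : S 0 0 * S 0 1 + S 0 1 * S 1 1 = Rmbar := by
    have := congrFun (congrFun hSsq 0) 1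
    simpa [Matrix.mul_apply, Fin.sum_univ_two] using this
  have e11 : S 1 0 * S 0 1 + S 1 1 * S 1 1 = 1 := by
    have := congrFun (congrFun hSsq 1) 1
    simpa [Matrix.mul_apply, Fin.sum_univ_two] using this
  -- diagonal positivity
  have hS00 : 0 < S 0 0 := by
    have h0 : (![1, 0] : Fin 2 → ℝ) ≠ 0 := by
      intro hcon
      have := congrFun hcon 0
      simp at this
    have := hS.dotProduct_mulVec_pos h0
    simpa [dotProduct, Matrix.mulVec, Fin.sum_univ_two] using this
  have hS11 : 0 < S 1 1 := by
    have h0 : (![0, 1] : Fin 2 → ℝ) ≠ 0 := by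
      intro hcon
      have := congrFun hcon 1
      simp at this
    have := hS.dotProduct_mulVec_pos h0
    simpa [dotProduct, Matrix.mulVec, Fin.sum_univ_two] using this
  have hdiag : S 1 1 = S 0 0 := by nlinarith [e00, e11, hsym]
  set A := S 0 0 with hA
  set B := S 0 1 with hB
  have h1 : A ^ 2 + B ^ 2 = 1 := by nlinarith [e00, hsym]
  have h2 : 2 * A * B = Rmbar := by nlinarith [e01, hdiag]
  -- determinant
  have hdetpos : 0 < S.det := hS.det_pos
  have hdet2 : S.det * S.det = 1 - Rmbar ^ 2 := by
    have hc := congrArg Matrix.det hSsq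
    rw [Matrix.det_mul] at hc
    rw [hc, Matrix.det_fin_two_of]; ring
  have hdetd : S.det = d := by
    rw [hd, ← hdet2, ← sq, Real.sqrt_sq hdetpos.le]
  have hAB : A ^ 2 - B ^ 2 = d := by
    have := Matrix.det_fin_two S
    rw [hdetd, hsym, hdiag] at this
    nlinarith [this]
  -- explicit inverse
  have hinv : S⁻¹ = !![A / d, -(B / d); -(B / d), A / d] := by
    apply Matrix.inv_eq_right_inv
    ext i k
    fin_cases i <;> fin_cases k <;>
      simp [Matrix.mul_apply, Fin.sum_univ_two, hsym, hdiag, ← hA, ← hB] <;>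
      field_simp <;> nlinarith [hAB]
  have hc1 : 0 ≤ 1 - Rmbar * Real.cos ψ := by
    nlinarith [Real.neg_one_le_cos ψ, Real.cos_le_one ψ]
  have h2d : (0 : ℝ) < 2 + 2 * d := by linarith
  -- RHS simplification
  have hBval : (1 / d + 1) ^ 2 + Rmbar ^ 2 / (1 - Rmbar ^ 2)
      - 2 * (1 / d + 1) * (Rmbar / d) * Real.cos ψ
      = (2 + 2 * d) * ((1 - Rmbar * Real.cos ψ) / d ^ 2) := by
    rw [← hdsq]
    field_simp
    linear_combination hdsq
  have hRHS : (1 / Real.sqrt (2 + 2 * d)) *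
      Real.sqrt ((1 / d + 1) ^ 2 + Rmbar ^ 2 / (1 - Rmbar ^ 2)
        - 2 * (1 / d + 1) * (Rmbar / d) * Real.cos ψ)
      = Real.sqrt ((1 - Rmbar * Real.cos ψ) / d ^ 2) := by
    rw [hBval, Real.sqrt_mul h2d.le, one_div, ← mul_assoc,
      inv_mul_cancel₀ (Real.sqrt_ne_zero'.2 h2d), one_mul]
  rw [hRHS]
  -- compute the entry
  fin_cases j
  · have h0 : ((S⁻¹.map (Complex.ofReal)) *ᵥ a) 0
        = ((A / d : ℝ) : ℂ) + ((-(B / d) : ℝ) : ℂ) * Complex.exp (-(ψ : ℂ) * Complex.I) := by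
      rw [hinv, ha]
      simp [Matrix.mulVec, dotProduct, Fin.sum_univ_two]
    rw [show (⟨0, by norm_num⟩ : Fin 2) = 0 from rfl, h0, habs_aux]
    congr 1
    field_simp
    linear_combination h1 - Real.cos ψ * h2
  · have h0 : ((S⁻¹.map (Complex.ofReal)) *ᵥ a) 1
        = ((-(B / d) : ℝ) : ℂ) + ((A / d : ℝ) : ℂ) * Complex.exp (-(ψ : ℂ) * Complex.I) := by
      rw [hinv, ha]
      simp [Matrix.mulVec, dotProduct, Fin.sum_univ_two]
    rw [show (⟨1, by norm_num⟩ : Fin 2) = 1 from rfl, h0, habs_aux]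
    congr 1
    field_simp
    linear_combination h1 - Real.cos ψ * h2
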